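/- For every rooted tree T, the matrices A_T and B_T both have rank |Vert(T)| − 1 over ℚ; in particular, both matrices have full row rank, since each has exactly |Vert(T)| − 1 rows. -/

import Mathlib

attribute [local instance] Classical.propDecidable

/-- A rooted tree on leaves `0, …, n`, rooted at the leaf `0`, with all edges directed
away from the root, no vertices of degree two, together with its (uniquely determined)
most-recent-common-ancestor function `lca` on leaf labels.  The parent map `par` sends
every non-root vertex to the vertex its unique incoming edge comes from, and fixes the
root.  A vertex `u` is a descendant of `v` iff some iterate of `par` sends `u` to `v`. -/
structure PhyloTree where
  n : ℕ
  hn : 1 ≤ n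
  V : Type
  fintypeV : Fintype V
  leaf : Fin (n + 1) ↪ V
  par : V → V
  par_root : par (leaf 0) = leaf 0
  par_ne : ∀ v : V, v ≠ leaf 0 → par v ≠ v
  reaches_root : ∀ v : V, ∃ k : ℕ, par^[k] v = leaf 0
  leaf_iff : ∀ v : V, v ≠ leaf 0 → (v ∈ Set.range leaf ↔ ∀ u, par u ≠ v)
  root_unique_child : ∃! u : V, u ≠ leaf 0 ∧ par u = leaf 0
  no_degree_two : ∀ v : V, v ∉ Set.range leaf → ∃ u w : V, u ≠ w ∧ par u = v ∧ par w = v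
  lca : Fin (n + 1) → Fin (n + 1) → V
  lca_anc_left : ∀ i j, ∃ k : ℕ, par^[k] (leaf i) = lca i j
  lca_anc_right : ∀ i j, ∃ k : ℕ, par^[k] (leaf j) = lca i j
  lca_min : ∀ i j (w : V), (∃ k : ℕ, par^[k] (leaf i) = w) →
      (∃ k : ℕ, par^[k] (leaf j) = w) → ∃ k : ℕ, par^[k] (lca i j) = w

instance (T : PhyloTree) : Fintype T.V := T.fintypeV

/-- `T.isAnc v u` : `v` is an ancestor of `u`, i.e. `u` is a descendant of `v`
(every vertex is a descendant of itself). -/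
def PhyloTree.isAnc (T : PhyloTree) (v u : T.V) : Prop := ∃ k : ℕ, T.par^[k] u = v

/-- The 2-element subsets `{i,j}` of `{0, …, n}`, encoded as ordered pairs `i < j`. -/
abbrev PairIdx (n : ℕ) := {q : Fin (n + 1) × Fin (n + 1) // q.1 < q.2}

/-- The non-root vertices of `T`; these index the rows of `A_T`, and are also in
bijection `v ↦ e(v)` with the edges of `T`, so they also index the rows of `B_T`. -/
abbrev PhyloTree.NR (T : PhyloTree) := {v : T.V // v ≠ T.leaf 0}

/-- The matrix `A_T`, with rows indexed by non-root vertices and columns indexed by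
2-element subsets `{i,j}` of `{0, …, n}`: the entry is `1` if `v = i`, `v = j` or
`v = lca(i,j)`, and `0` otherwise. -/
noncomputable def Amat (T : PhyloTree) (R : Type*) [Zero R] [One R] :
    Matrix T.NR (PairIdx T.n) R :=
  Matrix.of fun v s =>
    if v.1 = T.leaf s.1.1 ∨ v.1 = T.leaf s.1.2 ∨ v.1 = T.lca s.1.1 s.1.2 then 1 else 0

/-- `T.onPath v i j` : the edge `e(v)` lies on the unique path between the leaves
`i` and `j`, i.e. `v` lies strictly below `lca(i,j)` on the segment from `lca(i,j)`
down to `i` or on the segment from `lca(i,j)` down to `j`. -/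
def PhyloTree.onPath (T : PhyloTree) (v : T.V) (i j : Fin (T.n + 1)) : Prop :=
  v ≠ T.lca i j ∧ T.isAnc (T.lca i j) v ∧ (T.isAnc v (T.leaf i) ∨ T.isAnc v (T.leaf j))

/-- The matrix `B_T`, with rows indexed by the edges `e(v)` of `T` (equivalently, by the
non-root vertices `v`) and columns indexed by 2-element subsets `{i,j}` of `{0, …, n}`:
the entry is `1` if `e(v) ∈ P(i,j)` and `0` otherwise. -/
noncomputable def Bmat (T : PhyloTree) (R : Type*) [Zero R] [One R] :
    Matrix T.NR (PairIdx T.n) R :=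
  Matrix.of fun v s => if T.onPath v.1 s.1.1 s.1.2 then 1 else 0

/-- The monomial map `φ_M` associated to a nonnegative-integer matrix `M`, sending
`p_c` to `∏_r t_r ^ M(r,c)`. -/
noncomputable def toricMap {R C : Type*} [Fintype R] (M : Matrix R C ℕ) :
    MvPolynomial C ℂ →ₐ[ℂ] MvPolynomial R ℂ :=
  MvPolynomial.aeval fun c => ∏ r : R, MvPolynomial.X r ^ M r c
namespace PhyloTree

variable {T : PhyloTree}

lemma iterate_root (T : PhyloTree) (k : ℕ) : T.par^[k] (T.leaf 0) = T.leaf 0 := by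
  induction k with
  | zero => rfl
  | succ k ih => rw [Function.iterate_succ_apply', ih, T.par_root]

noncomputable def depth (T : PhyloTree) (v : T.V) : ℕ := Nat.find (T.reaches_root v)

lemma depth_spec (v : T.V) : T.par^[T.depth v] v = T.leaf 0 := Nat.find_spec (T.reaches_root v)

lemma depth_le {v : T.V} {k : ℕ} (h : T.par^[k] v = T.leaf 0) : T.depth v ≤ k :=
  Nat.find_min' _ h

lemma depth_root : T.depth (T.leaf 0) = 0 :=
  Nat.eq_zero_of_le_zero (depth_le (by rfl))

lemma eq_root_of_depth_eq_zero {v : T.V} (h : T.depth v = 0) : v = T.leaf 0 := by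
  have := depth_spec v; rwa [h] at this

lemma isAnc_refl (v : T.V) : T.isAnc v v := ⟨0, rfl⟩

lemma isAnc_trans {u v w : T.V} (h1 : T.isAnc u v) (h2 : T.isAnc v w) : T.isAnc u w := by
  obtain ⟨k, hk⟩ := h1; obtain ⟨m, hm⟩ := h2
  exact ⟨k + m, by rw [Function.iterate_add_apply, hm, hk]⟩

lemma root_isAnc (v : T.V) : T.isAnc (T.leaf 0) v := ⟨_, depth_spec v⟩

lemma eq_root_of_isAnc_root {v : T.V} (h : T.isAnc v (T.leaf 0)) : v = T.leaf 0 := by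
  obtain ⟨k, hk⟩ := h; rw [iterate_root] at hk; exact hk.symm

lemma depth_lt {u v : T.V} (h : T.isAnc u v) (hne : u ≠ v) : T.depth u < T.depth v := by
  obtain ⟨k, hk⟩ := h
  have hk0 : k ≠ 0 := by rintro rfl; exact hne hk.symm
  have hv : v ≠ T.leaf 0 := by
    rintro rfl; rw [iterate_root] at hk; exact hne hk.symm
  have hdv : 0 < T.depth v :=
    Nat.pos_of_ne_zero fun h0 => hv (eq_root_of_depth_eq_zero h0)
  by_cases hkd : k ≤ T.depth v
  · have h1 : T.par^[T.depth v - k] u = T.leaf 0 := by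
      rw [← hk, ← Function.iterate_add_apply, Nat.sub_add_cancel hkd]
      exact depth_spec v
    have := depth_le h1
    omega
  · have hu : u = T.leaf 0 := by
      rw [← hk, ← Nat.sub_add_cancel (le_of_lt (not_le.mp hkd)),
        Function.iterate_add_apply, depth_spec, iterate_root]
    rw [hu, depth_root]; exact hdv

lemma depth_le_of_isAnc {u v : T.V} (h : T.isAnc u v) : T.depth u ≤ T.depth v := by
  by_cases h' : u = v
  · rw [h']
  · exact (depth_lt h h').le

lemma isAnc_antisymm {u v : T.V} (h1 : T.isAnc u v) (h2 : T.isAnc v u) : u = v := by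
  by_contra hne
  have a1 := depth_lt h1 hne
  have a2 := depth_lt h2 (Ne.symm hne)
  omega

lemma eq_of_isAnc_of_depth_eq {u v : T.V} (h : T.isAnc u v) (hd : T.depth u = T.depth v) :
    u = v := by
  by_contra hne; have := depth_lt h hne; omega

lemma isAnc_comparable {u v w : T.V} (h1 : T.isAnc u w) (h2 : T.isAnc v w) :
    T.isAnc u v ∨ T.isAnc v u := by
  obtain ⟨k, hk⟩ := h1; obtain ⟨m, hm⟩ := h2
  rcases le_total k m with h | h
  · right
    exact ⟨m - k, by rw [← hk, ← Function.iterate_add_apply, Nat.sub_add_cancel h, hm]⟩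
  · left
    exact ⟨k - m, by rw [← hm, ← Function.iterate_add_apply, Nat.sub_add_cancel h, hk]⟩

lemma child_isAnc {u v : T.V} (h : T.par u = v) : T.isAnc v u := ⟨1, h⟩

lemma depth_child {u v : T.V} (hv : v ≠ T.leaf 0) (h : T.par u = v) :
    T.depth u = T.depth v + 1 := by
  have hne : u ≠ v := by rintro rfl; exact T.par_ne u hv h
  have h1 : T.depth v < T.depth u := depth_lt (child_isAnc h) (Ne.symm hne)
  have h2 : T.depth u ≤ T.depth v + 1 :=
    depth_le (by rw [Function.iterate_succ_apply, h]; exact depth_spec v)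
  omega

lemma lca_isAnc_left (i j : Fin (T.n + 1)) : T.isAnc (T.lca i j) (T.leaf i) :=
  T.lca_anc_left i j

lemma lca_isAnc_right (i j : Fin (T.n + 1)) : T.isAnc (T.lca i j) (T.leaf j) :=
  T.lca_anc_right i j

lemma isAnc_lca {i j : Fin (T.n + 1)} {w : T.V} (h1 : T.isAnc w (T.leaf i))
    (h2 : T.isAnc w (T.leaf j)) : T.isAnc w (T.lca i j) :=
  T.lca_min i j w h1 h2

lemma lca_comm (i j : Fin (T.n + 1)) : T.lca i j = T.lca j i :=
  isAnc_antisymm (T.lca_min j i _ (T.lca_anc_right i j) (T.lca_anc_left i j))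
    (T.lca_min i j _ (T.lca_anc_right j i) (T.lca_anc_left j i))

lemma lca_zero (i : Fin (T.n + 1)) : T.lca 0 i = T.leaf 0 := by
  obtain ⟨k, hk⟩ := T.lca_anc_left 0 i
  rw [iterate_root] at hk
  exact hk.symm

lemma exists_leaf_desc (v : T.V) : ∃ i, T.isAnc v (T.leaf i) := by
  set D := Finset.univ.sup T.depth with hD
  have hDle : ∀ w : T.V, T.depth w ≤ D := fun w => Finset.le_sup (Finset.mem_univ w)
  suffices h : ∀ m : ℕ, ∀ w : T.V, D + 1 - T.depth w ≤ m → ∃ i, T.isAnc w (T.leaf i) by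
    exact h (D + 1) v (by omega)
  intro m
  induction m with
  | zero => intro w hw; have := hDle w; omega
  | succ m ih =>
    intro w hw
    by_cases hr : w ∈ Set.range T.leaf
    · obtain ⟨i, hi⟩ := hr
      exact ⟨i, ⟨0, hi⟩⟩
    · have hwr : w ≠ T.leaf 0 := fun h => hr ⟨0, h.symm⟩
      have h2 : ∃ u, T.par u = w := by
        by_contra h; push_neg at h
        exact hr ((T.leaf_iff w hwr).mpr h)
      obtain ⟨u, hu⟩ := h2
      have hd : T.depth u = T.depth w + 1 := depth_child hwr hu
      have hDu := hDle u
      obtain ⟨i, hi⟩ := ih u (by omega)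
      exact ⟨i, isAnc_trans (child_isAnc hu) hi⟩

lemma exists_lca_pair {v : T.V} (hv : v ∉ Set.range T.leaf) (hv0 : v ≠ T.leaf 0) :
    ∃ a b : Fin (T.n + 1), a ≠ b ∧ T.lca a b = v := by
  obtain ⟨c1, c2, hne, h1, h2⟩ := T.no_degree_two v hv
  obtain ⟨a, ha⟩ := exists_leaf_desc c1
  obtain ⟨b, hb⟩ := exists_leaf_desc c2
  have hd1 : T.depth c1 = T.depth v + 1 := depth_child hv0 h1
  have hd2 : T.depth c2 = T.depth v + 1 := depth_child hv0 h2
  have hcc : ∀ {x y : T.V}, T.isAnc x y → T.depth x = T.depth y → x = y :=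
    fun hxy hdxy => eq_of_isAnc_of_depth_eq hxy hdxy
  have hab : a ≠ b := by
    rintro rfl
    rcases isAnc_comparable ha hb with h | h
    · exact hne (hcc h (by omega))
    · exact hne (hcc h (by omega)).symm
  have hva : T.isAnc v (T.leaf a) := isAnc_trans (child_isAnc h1) ha
  have hvb : T.isAnc v (T.leaf b) := isAnc_trans (child_isAnc h2) hb
  have hvL : T.isAnc v (T.lca a b) := isAnc_lca hva hvb
  refine ⟨a, b, hab, ?_⟩
  by_contra hLv
  have hdL : T.depth v < T.depth (T.lca a b) := depth_lt hvL fun h => hLv h.symm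
  have hLa : T.isAnc (T.lca a b) (T.leaf a) := lca_isAnc_left a b
  have hLb : T.isAnc (T.lca a b) (T.leaf b) := lca_isAnc_right a b
  have hc1L : T.isAnc c1 (T.lca a b) := by
    rcases isAnc_comparable hLa ha with h | h
    · have hle := depth_le_of_isAnc h
      have : T.lca a b = c1 := hcc h (by omega)
      rw [← this]; exact isAnc_refl _
    · exact h
  have hc2L : T.isAnc c2 (T.lca a b) := by
    rcases isAnc_comparable hLb hb with h | h
    · have hle := depth_le_of_isAnc h
      have : T.lca a b = c2 := hcc h (by omega)
      rw [← this]; exact isAnc_refl _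
    · exact h
  rcases isAnc_comparable hc1L hc2L with h | h
  · exact hne (hcc h (by omega))
  · exact hne (hcc h (by omega)).symm

end PhyloTree


namespace PhyloTree

variable {T : PhyloTree}

lemma onPath_zero {u : T.V} (hu : u ≠ T.leaf 0) (i : Fin (T.n + 1)) :
    T.onPath u 0 i ↔ T.isAnc u (T.leaf i) := by
  unfold PhyloTree.onPath
  rw [lca_zero]
  constructor
  · rintro ⟨-, -, h | h⟩
    · exact absurd (eq_root_of_isAnc_root h) hu
    · exact h
  · intro h; exact ⟨hu, root_isAnc u, Or.inr h⟩

lemma sum_single (u : T.NR) (M : Matrix T.NR (PairIdx T.n) ℚ) (p : PairIdx T.n) :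
    (∑ s, M u s * (if s = p then (1 : ℚ) else 0)) = M u p := by
  simp [mul_ite]

lemma ne_zero_of_isAnc {v : T.V} {a : Fin (T.n + 1)} (hv0 : v ≠ T.leaf 0)
    (h : T.isAnc v (T.leaf a)) : a ≠ 0 := by
  rintro rfl
  exact hv0 (eq_root_of_isAnc_root h)

/-- Column combination for `B`. -/
lemma B_col (v : T.NR) : ∃ c : PairIdx T.n → ℚ,
    (∑ s, Bmat T ℚ v s * c s) ≠ 0 ∧
    ∀ u : T.NR, u ≠ v → (∑ s, Bmat T ℚ u s * c s) ≠ 0 → T.isAnc u.1 v.1 := by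
  by_cases hv : v.1 ∈ Set.range T.leaf
  · obtain ⟨i, hi⟩ := hv
    have hi0 : i ≠ 0 := by rintro rfl; exact v.2 hi.symm
    have h0i : (0 : Fin (T.n + 1)) < i := Fin.pos_iff_ne_zero.mpr hi0
    refine ⟨fun s => if s = ⟨(0, i), h0i⟩ then 1 else 0, ?_, ?_⟩
    · rw [sum_single]
      have : T.onPath v.1 0 i := (onPath_zero v.2 i).mpr ⟨0, hi⟩
      simp [Bmat, this]
    · intro u _ hsum
      rw [sum_single] at hsum
      have : T.onPath u.1 0 i := by
        by_contra h
        simp [Bmat, h] at hsum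
      have := (onPath_zero u.2 i).mp this
      rwa [hi] at this
  · obtain ⟨a, b, hab, hlca⟩ := exists_lca_pair hv v.2
    have hva : T.isAnc v.1 (T.leaf a) := hlca ▸ lca_isAnc_left a b
    have hvb : T.isAnc v.1 (T.leaf b) := hlca ▸ lca_isAnc_right a b
    have ha0 : a ≠ 0 := ne_zero_of_isAnc v.2 hva
    have hb0 : b ≠ 0 := ne_zero_of_isAnc v.2 hvb
    -- wlog a < b
    suffices key : ∀ a b : Fin (T.n + 1), a < b → T.lca a b = v.1 → ∃ c : PairIdx T.n → ℚ,
        (∑ s, Bmat T ℚ v s * c s) ≠ 0 ∧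
        ∀ u : T.NR, u ≠ v → (∑ s, Bmat T ℚ u s * c s) ≠ 0 → T.isAnc u.1 v.1 by
      rcases hab.lt_or_gt with h | h
      · exact key a b h hlca
      · exact key b a h (by rw [lca_comm]; exact hlca)
    clear hab hlca hva hvb ha0 hb0 a b
    intro a b hab hlca
    have hva : T.isAnc v.1 (T.leaf a) := hlca ▸ lca_isAnc_left a b
    have hvb : T.isAnc v.1 (T.leaf b) := hlca ▸ lca_isAnc_right a b
    have ha0 : a ≠ 0 := ne_zero_of_isAnc v.2 hva
    have hb0 : b ≠ 0 := ne_zero_of_isAnc v.2 hvb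
    have h0a : (0 : Fin (T.n + 1)) < a := Fin.pos_iff_ne_zero.mpr ha0
    have h0b : (0 : Fin (T.n + 1)) < b := Fin.pos_iff_ne_zero.mpr hb0
    set p1 : PairIdx T.n := ⟨(0, a), h0a⟩
    set p2 : PairIdx T.n := ⟨(0, b), h0b⟩
    set p3 : PairIdx T.n := ⟨(a, b), hab⟩
    refine ⟨fun s => (if s = p1 then 1 else 0) + (if s = p2 then 1 else 0)
      - (if s = p3 then 1 else 0), ?_, ?_⟩ <;>
    · simp only [mul_add, mul_sub, Finset.sum_add_distrib, Finset.sum_sub_distrib,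
        sum_single]
      have e1 : ∀ u : T.NR, Bmat T ℚ u p1 = if T.isAnc u.1 (T.leaf a) then 1 else 0 :=
        fun u => if_congr (onPath_zero u.2 a) rfl rfl
      have e2 : ∀ u : T.NR, Bmat T ℚ u p2 = if T.isAnc u.1 (T.leaf b) then 1 else 0 :=
        fun u => if_congr (onPath_zero u.2 b) rfl rfl
      have e3 : ∀ u : T.NR, Bmat T ℚ u p3 = if T.onPath u.1 a b then 1 else 0 :=
        fun u => rfl
      first
      | -- diagonal goal
        (rw [e1, e2, e3]
         have hz : ¬ T.onPath v.1 a b := fun h => h.1 hlca.symm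
         simp [hva, hvb, hz])
      | -- off-diagonal goal
        (intro u huv hsum
         rw [e1, e2, e3] at hsum
         have huv1 : u.1 ≠ v.1 := fun h => huv (Subtype.ext h)
         by_cases hX : T.isAnc u.1 (T.leaf a) <;> by_cases hY : T.isAnc u.1 (T.leaf b)
         · exact hlca ▸ isAnc_lca hX hY
         · exfalso
           have hZ : T.onPath u.1 a b := by
             refine ⟨fun h => huv1 (h.trans hlca), ?_, Or.inl hX⟩
             rcases isAnc_comparable hX hva with h | h
             · exact absurd (isAnc_trans h hvb) hY
             · exact hlca ▸ h
           simp [hX, hY, hZ] at hsum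
         · exfalso
           have hZ : T.onPath u.1 a b := by
             refine ⟨fun h => huv1 (h.trans hlca), ?_, Or.inr hY⟩
             rcases isAnc_comparable hY hvb with h | h
             · exact absurd (isAnc_trans h hva) hX
             · exact hlca ▸ h
           simp [hX, hY, hZ] at hsum
         · exfalso
           have hZ : ¬ T.onPath u.1 a b := fun h => h.2.2.elim hX hY
           simp [hX, hY, hZ] at hsum)

/-- Column selection for `A`. -/
lemma A_col (v : T.NR) : ∃ c : PairIdx T.n → ℚ,
    (∑ s, Amat T ℚ v s * c s) ≠ 0 ∧
    ∀ u : T.NR, u ≠ v → (∑ s, Amat T ℚ u s * c s) ≠ 0 → T.isAnc v.1 u.1 ∧ u.1 ≠ v.1 := by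
  by_cases hv : v.1 ∈ Set.range T.leaf
  · obtain ⟨i, hi⟩ := hv
    have hi0 : i ≠ 0 := by rintro rfl; exact v.2 hi.symm
    have h0i : (0 : Fin (T.n + 1)) < i := Fin.pos_iff_ne_zero.mpr hi0
    set p : PairIdx T.n := ⟨(0, i), h0i⟩
    have e : ∀ u : T.NR, Amat T ℚ u p = if u.1 = T.leaf i then 1 else 0 := by
      intro u
      have : (u.1 = T.leaf 0 ∨ u.1 = T.leaf i ∨ u.1 = T.lca 0 i) ↔ u.1 = T.leaf i := by
        rw [lca_zero]
        constructor
        · rintro (h | h | h)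
          · exact absurd h u.2
          · exact h
          · exact absurd h u.2
        · exact fun h => Or.inr (Or.inl h)
      exact if_congr this rfl rfl
    refine ⟨fun s => if s = p then 1 else 0, ?_, ?_⟩
    · rw [sum_single, e]
      simp [hi.symm]
    · intro u huv hsum
      rw [sum_single, e] at hsum
      have : u.1 = T.leaf i := by
        by_contra h; simp [h] at hsum
      exact absurd (Subtype.ext (this.trans hi)) huv
  · obtain ⟨a, b, hab, hlca⟩ := exists_lca_pair hv v.2
    have hva : T.isAnc v.1 (T.leaf a) := hlca ▸ lca_isAnc_left a b
    have hvb : T.isAnc v.1 (T.leaf b) := hlca ▸ lca_isAnc_right a b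
    suffices key : ∀ a b : Fin (T.n + 1), a < b → T.lca a b = v.1 → ∃ c : PairIdx T.n → ℚ,
        (∑ s, Amat T ℚ v s * c s) ≠ 0 ∧
        ∀ u : T.NR, u ≠ v → (∑ s, Amat T ℚ u s * c s) ≠ 0 →
          T.isAnc v.1 u.1 ∧ u.1 ≠ v.1 by
      rcases hab.lt_or_gt with h | h
      · exact key a b h hlca
      · exact key b a h (by rw [lca_comm]; exact hlca)
    clear hab hlca hva hvb a b
    intro a b hab hlca
    have hva : T.isAnc v.1 (T.leaf a) := hlca ▸ lca_isAnc_left a b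
    have hvb : T.isAnc v.1 (T.leaf b) := hlca ▸ lca_isAnc_right a b
    set p : PairIdx T.n := ⟨(a, b), hab⟩
    have hla : T.leaf a ≠ v.1 := fun h => hv ⟨a, h⟩
    have hlb : T.leaf b ≠ v.1 := fun h => hv ⟨b, h⟩
    refine ⟨fun s => if s = p then 1 else 0, ?_, ?_⟩
    · rw [sum_single]
      have : v.1 = T.leaf a ∨ v.1 = T.leaf b ∨ v.1 = T.lca a b := Or.inr (Or.inr hlca.symm)
      simp [Amat, p, this, hlca]
    · intro u huv hsum
      rw [sum_single] at hsum
      have hcond : u.1 = T.leaf a ∨ u.1 = T.leaf b ∨ u.1 = T.lca a b := by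
        by_contra h
        simp [Amat, p, h] at hsum
      have huv1 : u.1 ≠ v.1 := fun h => huv (Subtype.ext h)
      rcases hcond with h | h | h
      · exact ⟨h ▸ hva, huv1⟩
      · exact ⟨h ▸ hvb, huv1⟩
      · exact absurd (h.trans hlca) huv1

end PhyloTree


lemma rank_eq_card_aux {m k : Type} [Fintype m] [Fintype k] (M : Matrix m k ℚ) (f : m → ℕ)
    (h : ∀ v : m, ∃ c : k → ℚ, (∑ s, M v s * c s) ≠ 0 ∧
        ∀ u : m, u ≠ v → (∑ s, M u s * c s) ≠ 0 → f u < f v) :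
    M.rank = Fintype.card m := by
  refine le_antisymm M.rank_le_card_height ?_
  set N : Matrix k m ℚ := Matrix.of fun s v => (h v).choose s with hN
  have hdiag : ∀ v, (M * N) v v ≠ 0 := fun v => by
    rw [Matrix.mul_apply]; exact (h v).choose_spec.1
  have hoff : ∀ u v, u ≠ v → (M * N) u v ≠ 0 → f u < f v := fun u v huv hnz =>
    (h v).choose_spec.2 u huv (by rwa [Matrix.mul_apply] at hnz)
  set P := Matrix.transpose (M * N) with hP
  have key : ∀ x : m → ℚ, P.mulVec x = 0 → x = 0 := by
    intro x hx
    have main : ∀ B : ℕ, ∀ v : m, f v < B → x v = 0 := by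
      intro B
      induction B with
      | zero => intro v hv; omega
      | succ B ih =>
        intro v hv
        have hrow : ∑ u, P v u * x u = 0 := by
          have := congrFun hx v
          simpa [Matrix.mulVec, dotProduct] using this
        have hz : ∀ u ∈ Finset.univ.erase v, P v u * x u = 0 := by
          intro u hu
          have hune : u ≠ v := Finset.ne_of_mem_erase hu
          by_cases hPu : (M * N) u v = 0
          · have : P v u = 0 := hPu
            rw [this, zero_mul]
          · have hfu := hoff u v hune hPu
            rw [ih u (by omega), mul_zero]
        rw [← Finset.add_sum_erase _ _ (Finset.mem_univ v), Finset.sum_eq_zero hz,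
          add_zero] at hrow
        exact (mul_eq_zero.mp hrow).resolve_left (hdiag v)
    exact funext fun v => main (f v + 1) v (by omega)
  have hinj : Function.Injective P.mulVecLin := by
    intro x y hxy
    have h0 : P.mulVecLin (x - y) = 0 := by rw [map_sub, hxy, sub_self]
    have := key (x - y) (by simpa [Matrix.mulVecLin_apply] using h0)
    exact sub_eq_zero.mp this
  have h1 : P.rank = Fintype.card m := by
    rw [Matrix.rank, LinearMap.finrank_range_of_inj hinj,
      Module.finrank_fintype_fun_eq_card]
  calc Fintype.card m = P.rank := h1.symm
    _ = (M * N).rank := Matrix.rank_transpose _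
    _ ≤ M.rank := Matrix.rank_mul_le_left M N


/-- For every rooted tree `T`, the matrices `A_T` and `B_T` both have rank
`|Vert(T)| − 1` over `ℚ`; in particular both have full row rank, since each has exactly
`|Vert(T)| − 1` rows. -/
theorem statement6 (T : PhyloTree) :
    Fintype.card T.NR = Fintype.card T.V - 1 ∧
    (Amat T ℚ).rank = Fintype.card T.V - 1 ∧
    (Bmat T ℚ).rank = Fintype.card T.V - 1 := by
  have hcard : Fintype.card T.NR = Fintype.card T.V - 1 := by
    have h1 : Fintype.card {v : T.V // v = T.leaf 0} = 1 := Fintype.card_subtype_eq _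
    have h2 := Fintype.card_subtype_compl (fun v : T.V => v = T.leaf 0)
    have h3 : Fintype.card T.NR = Fintype.card {v : T.V // ¬ v = T.leaf 0} :=
      Fintype.card_congr (Equiv.refl _)
    rw [h3, h2, h1]
  have hD : ∀ w : T.V, T.depth w ≤ Finset.univ.sup T.depth :=
    fun w => Finset.le_sup (Finset.mem_univ w)
  refine ⟨hcard, ?_, ?_⟩
  · rw [← hcard]
    apply rank_eq_card_aux (f := fun u : T.NR =>
      Finset.univ.sup T.depth + 1 - T.depth u.1)
    intro v
    obtain ⟨c, hc1, hc2⟩ := PhyloTree.A_col v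
    refine ⟨c, hc1, fun u huv hsum => ?_⟩
    obtain ⟨hanc, hne⟩ := hc2 u huv hsum
    have := PhyloTree.depth_lt hanc (Ne.symm hne)
    have := hD u.1
    have := hD v.1
    omega
  · rw [← hcard]
    apply rank_eq_card_aux (f := fun u : T.NR => T.depth u.1)
    intro v
    obtain ⟨c, hc1, hc2⟩ := PhyloTree.B_col v
    refine ⟨c, hc1, fun u huv hsum => ?_⟩
    have hanc := hc2 u huv hsum
    exact PhyloTree.depth_lt hanc (fun h => huv (Subtype.ext h))
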